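/- Let (fₙ) be a sequence of continuous functions on [0,1] converging pointwise to f : [0,1] → ℝ. Suppose that for every ε > 0 there exists δ > 0 such that ∫₀¹ ω(fₙ, δ) < ε for all n. Then f is Riemann integrable on [0,1]. -/

import Mathlib

noncomputable def osc (f : ℝ → ℝ) (ε : ℝ) (x : ℝ) : ℝ :=
  sSup {d : ℝ | ∃ t ∈ Set.Icc (x - ε) (x + ε) ∩ Set.Icc (0:ℝ) 1,
                ∃ s ∈ Set.Icc (x - ε) (x + ε) ∩ Set.Icc (0:ℝ) 1,
                d = |f t - f s|}

/-- A tagged partition of `[0,1]`. -/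
structure TaggedPartition where
  n : ℕ
  x : ℕ → ℝ
  t : ℕ → ℝ
  n_pos : 0 < n
  x_zero : x 0 = 0
  x_last : x n = 1
  x_mono : ∀ k < n, x k < x (k+1)
  t_mem : ∀ k < n, t k ∈ Set.Icc (x k) (x (k+1))

/-- The mesh of the tagged partition is at most `δ`. -/
def TaggedPartition.meshLE (τ : TaggedPartition) (δ : ℝ) : Prop :=
  ∀ k < τ.n, τ.x (k+1) - τ.x k ≤ δ

/-- The Riemann sum of `f` over a tagged partition of `[0,1]`. -/
def riemannSum (f : ℝ → ℝ) (τ : TaggedPartition) : ℝ :=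
  ∑ k ∈ Finset.range τ.n, f (τ.t k) * (τ.x (k+1) - τ.x k)

/-- Riemann integrability on `[0,1]`: Riemann sums converge as the mesh tends to 0. -/
def RiemannIntegrableOn01 (f : ℝ → ℝ) : Prop :=
  ∃ A : ℝ, ∀ ε > 0, ∃ δ > 0, ∀ τ : TaggedPartition,
    τ.meshLE δ → |riemannSum f τ - A| < ε

open Set

lemma clamp_mem {a b : ℝ} (h : a ≤ b) (u : ℝ) : max a (min u b) ∈ Set.Icc a b :=
  ⟨le_max_left _ _, max_le h (min_le_right _ _)⟩

lemma clamp_close {a b t u : ℝ} (ht : t ∈ Set.Icc a b) :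
    |t - max a (min u b)| ≤ |t - u| := by
  obtain ⟨h1, h2⟩ := ht
  rcases le_total u b with h | h
  · rw [min_eq_left h]
    rcases le_total a u with h' | h'
    · rw [max_eq_right h']
    · rw [max_eq_left h', abs_of_nonneg (by linarith), abs_of_nonneg (by linarith)]
      linarith
  · rw [min_eq_right h, max_eq_right (le_trans h1 h2),
      abs_of_nonpos (by linarith), abs_of_nonpos (by linarith)]
    linarith

lemma clamp_dist {x y δ t : ℝ} (hδ : 0 ≤ δ) (ht : t ∈ Set.Icc (x - δ) (x + δ)) :
    |t - max (y - δ) (min t (y + δ))| ≤ |x - y| := by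
  obtain ⟨h1, h2⟩ := ht
  rcases le_total t (y + δ) with h | h
  · rw [min_eq_left h]
    rcases le_total (y - δ) t with h' | h'
    · rw [max_eq_right h']
      simpa using abs_nonneg (x - y)
    · rw [max_eq_left h', abs_of_nonpos (by linarith)]
      have : y - x ≤ |x - y| := by rw [abs_sub_comm]; exact le_abs_self _
      linarith
  · rw [min_eq_right h, max_eq_right (by linarith), abs_of_nonneg (by linarith)]
    have : x - y ≤ |x - y| := le_abs_self _
    linarith

lemma move {δ x y t : ℝ} (hδ : 0 < δ) (hy : y ∈ Set.Icc (-δ) (1 + δ))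
    (ht : t ∈ Set.Icc (x - δ) (x + δ) ∩ Set.Icc (0:ℝ) 1) :
    ∃ t' ∈ Set.Icc (y - δ) (y + δ) ∩ Set.Icc (0:ℝ) 1, |t - t'| ≤ |x - y| := by
  obtain ⟨ht1, ht2⟩ := ht
  set u := max (y - δ) (min t (y + δ)) with hu
  have hu_mem : u ∈ Set.Icc (y - δ) (y + δ) := clamp_mem (by linarith) t
  refine ⟨max 0 (min u 1), ⟨?_, clamp_mem zero_le_one u⟩, ?_⟩
  · rcases le_total u 0 with h | h
    · rw [min_eq_left (le_trans h zero_le_one), max_eq_left h]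
      exact ⟨by linarith [hu_mem.1], by linarith [hy.1]⟩
    · rcases le_total u 1 with h1 | h1
      · rw [min_eq_left h1, max_eq_right h]
        exact hu_mem
      · rw [min_eq_right h1, max_eq_right zero_le_one]
        exact ⟨by linarith [hy.2], by linarith [hu_mem.2]⟩
  · exact le_trans (clamp_close ht2) (clamp_dist hδ.le ht1)

def oscSet (f : ℝ → ℝ) (ε : ℝ) (x : ℝ) : Set ℝ :=
  {d : ℝ | ∃ t ∈ Set.Icc (x - ε) (x + ε) ∩ Set.Icc (0:ℝ) 1,
                ∃ s ∈ Set.Icc (x - ε) (x + ε) ∩ Set.Icc (0:ℝ) 1,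
                d = |f t - f s|}

lemma osc_eq (f : ℝ → ℝ) (ε x : ℝ) : osc f ε x = sSup (oscSet f ε x) := rfl

lemma osc_nonneg (f : ℝ → ℝ) (ε x : ℝ) : 0 ≤ osc f ε x := by
  apply Real.sSup_nonneg
  rintro d ⟨t, ht, s, hs, rfl⟩
  exact abs_nonneg _

lemma osc_bdd {g : ℝ → ℝ} {M : ℝ} (hM : ∀ u ∈ Set.Icc (0:ℝ) 1, |g u| ≤ M)
    (δ x : ℝ) : BddAbove (oscSet g δ x) := by
  refine ⟨2 * M, ?_⟩
  rintro d ⟨t, ht, s, hs, rfl⟩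
  have h1 : |g t| ≤ M := hM t ht.2
  have h2 : |g s| ≤ M := hM s hs.2
  calc |g t - g s| ≤ |g t| + |g s| := abs_sub _ _
    _ ≤ 2 * M := by linarith

lemma le_osc {g : ℝ → ℝ} {M : ℝ} (hM : ∀ u ∈ Set.Icc (0:ℝ) 1, |g u| ≤ M)
    {δ x t s : ℝ} (ht : t ∈ Set.Icc (x - δ) (x + δ) ∩ Set.Icc (0:ℝ) 1)
    (hs : s ∈ Set.Icc (x - δ) (x + δ) ∩ Set.Icc (0:ℝ) 1) :
    |g t - g s| ≤ osc g δ x :=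
  le_csSup (osc_bdd hM δ x) ⟨t, ht, s, hs, rfl⟩

lemma osc_le_osc_add {g : ℝ → ℝ} {M δ x y ε : ℝ} (hδ : 0 < δ)
    (hM : ∀ u ∈ Set.Icc (0:ℝ) 1, |g u| ≤ M)
    (hy : y ∈ Set.Icc (-δ) (1 + δ)) (hε : 0 ≤ ε)
    (hmod : ∀ u ∈ Set.Icc (0:ℝ) 1, ∀ v ∈ Set.Icc (0:ℝ) 1, |u - v| ≤ |x - y| → |g u - g v| ≤ ε) :
    osc g δ x ≤ osc g δ y + ε + ε := by
  rw [osc_eq]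
  apply Real.sSup_le
  · rintro d ⟨t, ht, s, hs, rfl⟩
    obtain ⟨t', ht', hdt⟩ := move hδ hy ht
    obtain ⟨s', hs', hds⟩ := move hδ hy hs
    have h1 : |g t' - g s'| ≤ osc g δ y := le_osc hM ht' hs'
    have h2 : |g t - g t'| ≤ ε := hmod t ht.2 t' ht'.2 hdt
    have h3 : |g s - g s'| ≤ ε := hmod s hs.2 s' hs'.2 hds
    have h4 : |g t - g s| ≤ |g t - g t'| + |g t' - g s| := abs_sub_le _ _ _
    have h5 : |g t' - g s| ≤ |g t' - g s'| + |g s' - g s| := abs_sub_le _ _ _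
    have h6 : |g s' - g s| = |g s - g s'| := abs_sub_comm _ _
    linarith
  · linarith [osc_nonneg g δ y]

lemma osc_continuousOn {g : ℝ → ℝ} {δ : ℝ} (hδ : 0 < δ)
    (hg : ContinuousOn g (Set.Icc (0:ℝ) 1)) :
    ContinuousOn (osc g δ) (Set.Icc (0:ℝ) 1) := by
  obtain ⟨M, hM⟩ := isCompact_Icc.exists_bound_of_continuousOn hg
  have hM' : ∀ u ∈ Set.Icc (0:ℝ) 1, |g u| ≤ M := fun u hu => hM u hu
  have hu : UniformContinuousOn g (Set.Icc (0:ℝ) 1) :=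
    isCompact_Icc.uniformContinuousOn_of_continuous hg
  rw [Metric.uniformContinuousOn_iff] at hu
  rw [Metric.continuousOn_iff]
  intro b hb ε hε
  obtain ⟨η, hη, hmod⟩ := hu (ε / 5) (by linarith)
  refine ⟨η, hη, fun p hp hpb => ?_⟩
  have key : ∀ q r : ℝ, q ∈ Set.Icc (0:ℝ) 1 → r ∈ Set.Icc (0:ℝ) 1 → |q - r| < η →
      osc g δ q ≤ osc g δ r + ε / 5 + ε / 5 := by
    intro q r hq hr hqr
    refine osc_le_osc_add hδ hM' ⟨by linarith [hr.1], by linarith [hr.2]⟩ (by linarith) ?_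
    intro u hu' v hv huv
    have : dist u v < η := by rw [Real.dist_eq]; exact lt_of_le_of_lt (le_trans huv (le_refl _)) hqr
    exact (le_of_lt (hmod u hu' v hv this)).trans (by linarith)
  rw [Real.dist_eq] at hpb ⊢
  have k1 := key p b hp hb hpb
  have k2 := key b p hb hp (by rw [abs_sub_comm]; exact hpb)
  rw [abs_lt]
  constructor <;> linarith

lemma TaggedPartition.x_le (τ : TaggedPartition) {i j : ℕ} (hij : i ≤ j) (hj : j ≤ τ.n) :
    τ.x i ≤ τ.x j := by
  induction j with
  | zero => simpa [Nat.le_zero.mp hij]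
  | succ m ih =>
    rcases Nat.lt_or_ge i (m+1) with h | h
    · have h1 : τ.x i ≤ τ.x m := ih (Nat.lt_succ_iff.mp h) (by omega)
      have h2 : τ.x m < τ.x (m+1) := τ.x_mono m (by omega)
      linarith
    · have : i = m + 1 := le_antisymm hij h
      simp [this]

lemma TaggedPartition.x_mem (τ : TaggedPartition) {k : ℕ} (hk : k ≤ τ.n) :
    τ.x k ∈ Set.Icc (0:ℝ) 1 := by
  constructor
  · rw [← τ.x_zero]; exact τ.x_le (Nat.zero_le k) hk
  · rw [← τ.x_last]; exact τ.x_le hk le_rfl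

lemma riemann_close {g : ℝ → ℝ} {δ : ℝ} (hδ : 0 < δ)
    (hg : ContinuousOn g (Set.Icc (0:ℝ) 1)) (τ : TaggedPartition) (hτ : τ.meshLE δ) :
    |riemannSum g τ - ∫ x in (0:ℝ)..1, g x| ≤ ∫ x in (0:ℝ)..1, osc g δ x := by
  obtain ⟨M, hM⟩ := isCompact_Icc.exists_bound_of_continuousOn hg
  have hM' : ∀ u ∈ Set.Icc (0:ℝ) 1, |g u| ≤ M := fun u hu => hM u hu
  have hoc : ContinuousOn (osc g δ) (Set.Icc (0:ℝ) 1) := osc_continuousOn hδ hg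
  have hsub : ∀ k < τ.n, Set.uIcc (τ.x k) (τ.x (k+1)) ⊆ Set.Icc (0:ℝ) 1 := by
    intro k hk
    rw [Set.uIcc_of_le (τ.x_mono k hk).le]
    exact Set.Icc_subset_Icc (τ.x_mem (by omega)).1 (τ.x_mem hk).2
  have hgint : ∀ k < τ.n, IntervalIntegrable g MeasureTheory.volume (τ.x k) (τ.x (k+1)) :=
    fun k hk => (hg.mono (hsub k hk)).intervalIntegrable
  have hoint : ∀ k < τ.n, IntervalIntegrable (osc g δ) MeasureTheory.volume (τ.x k) (τ.x (k+1)) :=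
    fun k hk => (hoc.mono (hsub k hk)).intervalIntegrable
  have h1 : ∫ x in (0:ℝ)..1, g x = ∑ k ∈ Finset.range τ.n, ∫ x in (τ.x k)..(τ.x (k+1)), g x := by
    rw [intervalIntegral.sum_integral_adjacent_intervals hgint, τ.x_zero, τ.x_last]
  have h2 : ∫ x in (0:ℝ)..1, osc g δ x
      = ∑ k ∈ Finset.range τ.n, ∫ x in (τ.x k)..(τ.x (k+1)), osc g δ x := by
    rw [intervalIntegral.sum_integral_adjacent_intervals hoint, τ.x_zero, τ.x_last]
  rw [h1, h2, riemannSum, ← Finset.sum_sub_distrib]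
  refine le_trans (Finset.abs_sum_le_sum_abs _ _) (Finset.sum_le_sum ?_)
  intro k hk
  rw [Finset.mem_range] at hk
  have hab : τ.x k ≤ τ.x (k+1) := (τ.x_mono k hk).le
  have hIsub : Set.Icc (τ.x k) (τ.x (k+1)) ⊆ Set.Icc (0:ℝ) 1 := by
    rw [← Set.uIcc_of_le hab]; exact hsub k hk
  have hconst : g (τ.t k) * (τ.x (k+1) - τ.x k) = ∫ _ in (τ.x k)..(τ.x (k+1)), g (τ.t k) := by
    rw [intervalIntegral.integral_const, smul_eq_mul, mul_comm]
  rw [hconst, ← intervalIntegral.integral_sub (intervalIntegrable_const) (hgint k hk)]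
  refine le_trans (intervalIntegral.abs_integral_le_integral_abs hab) ?_
  apply intervalIntegral.integral_mono_on hab
  · apply ContinuousOn.intervalIntegrable
    rw [Set.uIcc_of_le hab]
    exact (continuousOn_const.sub (hg.mono hIsub)).abs
  · exact (hoint k hk)
  · intro y hy
    have hyk : y ∈ Set.Icc (0:ℝ) 1 := hIsub hy
    have htk := τ.t_mem k hk
    refine le_osc hM' ⟨⟨?_, ?_⟩, hIsub htk⟩ ⟨⟨by linarith, by linarith⟩, hyk⟩
    · have := hτ k hk
      have := htk.1
      have := hy.2
      linarith
    · have := hτ k hk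
      have := htk.2
      have := hy.1
      linarith

noncomputable def unifPart (m : ℕ) (hm : 0 < m) : TaggedPartition where
  n := m
  x := fun k => (k : ℝ) / m
  t := fun k => (k : ℝ) / m
  n_pos := hm
  x_zero := by simp
  x_last := by field_simp
  x_mono := fun k _ => by
    have hm' : (0:ℝ) < m := by exact_mod_cast hm
    show (k:ℝ)/m < ((k+1:ℕ):ℝ)/m
    gcongr
    push_cast
    linarith
  t_mem := fun k hk => ⟨le_refl _, by
    have hm' : (0:ℝ) < m := by exact_mod_cast hm
    show (k:ℝ)/m ≤ ((k+1:ℕ):ℝ)/m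
    gcongr
    push_cast
    linarith⟩

lemma unifPart_mesh {δ : ℝ} (hδ : 0 < δ) :
    ∃ τ : TaggedPartition, τ.meshLE δ := by
  set m := max 1 ⌈1/δ⌉₊ with hm
  have hm0 : 0 < m := lt_of_lt_of_le Nat.one_pos (le_max_left _ _)
  have hm' : (0:ℝ) < m := by exact_mod_cast hm0
  refine ⟨unifPart m hm0, fun k hk => ?_⟩
  show ((k+1:ℕ):ℝ)/m - (k:ℝ)/m ≤ δ
  have h1 : ((k+1:ℕ):ℝ)/m - (k:ℝ)/m = 1/m := by push_cast; field_simp; ring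
  rw [h1]
  have h2 : 1/δ ≤ (m:ℝ) := by
    calc (1/δ : ℝ) ≤ ⌈1/δ⌉₊ := Nat.le_ceil _
      _ ≤ m := by exact_mod_cast Nat.le_max_right 1 ⌈1/δ⌉₊
  rw [div_le_iff₀ hm']
  rw [div_le_iff₀ hδ] at h2
  linarith

theorem stmt_5 (f : ℝ → ℝ) (fseq : ℕ → ℝ → ℝ)
    (hcont : ∀ n, ContinuousOn (fseq n) (Set.Icc (0:ℝ) 1))
    (hptwise : ∀ x ∈ Set.Icc (0:ℝ) 1,
      Filter.Tendsto (fun n => fseq n x) Filter.atTop (nhds (f x)))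
    (hosc : ∀ ε > (0:ℝ), ∃ δ > (0:ℝ),
      ∀ n, (∫ x in (0:ℝ)..1, osc (fseq n) δ x) < ε) :
    RiemannIntegrableOn01 f := by
  set a : ℕ → ℝ := fun n => ∫ x in (0:ℝ)..1, fseq n x with ha
  have key : ∀ ε > (0:ℝ), ∃ δ > (0:ℝ), ∀ n, ∀ τ : TaggedPartition, τ.meshLE δ →
      |riemannSum (fseq n) τ - a n| ≤ ε := by
    intro ε hε
    obtain ⟨δ, hδ, h⟩ := hosc ε hε
    exact ⟨δ, hδ, fun n τ hτ => le_trans (riemann_close hδ (hcont n) τ hτ) (h n).le⟩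
  have hS : ∀ τ : TaggedPartition, Filter.Tendsto (fun n => riemannSum (fseq n) τ)
      Filter.atTop (nhds (riemannSum f τ)) := by
    intro τ
    have : ∀ n, riemannSum (fseq n) τ
        = ∑ k ∈ Finset.range τ.n, fseq n (τ.t k) * (τ.x (k+1) - τ.x k) := fun n => rfl
    simp only [this, riemannSum]
    apply tendsto_finset_sum
    intro k hk
    rw [Finset.mem_range] at hk
    have htk : τ.t k ∈ Set.Icc (0:ℝ) 1 := by
      have h1 := τ.t_mem k hk
      exact ⟨le_trans (τ.x_mem (Nat.le_of_lt hk)).1 h1.1,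
        le_trans h1.2 (τ.x_mem hk).2⟩
    exact (hptwise (τ.t k) htk).mul_const _
  have hCauchy : CauchySeq a := by
    rw [Metric.cauchySeq_iff]
    intro ε hε
    obtain ⟨δ, hδ, hkey⟩ := key (ε/4) (by linarith)
    obtain ⟨τ₀, hτ₀⟩ := unifPart_mesh hδ
    have hSc : CauchySeq (fun n => riemannSum (fseq n) τ₀) := (hS τ₀).cauchySeq
    rw [Metric.cauchySeq_iff] at hSc
    obtain ⟨N, hN⟩ := hSc (ε/4) (by linarith)
    refine ⟨N, fun m hm n hn => ?_⟩
    have h1 := hkey m τ₀ hτ₀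
    have h2 := hkey n τ₀ hτ₀
    have h3 := hN m hm n hn
    rw [Real.dist_eq] at h3 ⊢
    set Sm := riemannSum (fseq m) τ₀
    set Sn := riemannSum (fseq n) τ₀
    have t1 : |a m - a n| ≤ |a m - Sm| + |Sm - a n| := abs_sub_le _ _ _
    have t2 : |Sm - a n| ≤ |Sm - Sn| + |Sn - a n| := abs_sub_le _ _ _
    have t3 : |a m - Sm| = |Sm - a m| := abs_sub_comm _ _
    linarith
  obtain ⟨A, hA⟩ := cauchySeq_tendsto_of_complete hCauchy
  refine ⟨A, fun ε hε => ?_⟩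
  obtain ⟨δ, hδ, hkey⟩ := key (ε/2) (by linarith)
  refine ⟨δ, hδ, fun τ hτ => ?_⟩
  have hlim : Filter.Tendsto (fun n => |riemannSum (fseq n) τ - a n|)
      Filter.atTop (nhds |riemannSum f τ - A|) := ((hS τ).sub hA).abs
  have hle : |riemannSum f τ - A| ≤ ε/2 :=
    le_of_tendsto hlim (Filter.Eventually.of_forall fun n => hkey n τ hτ)
  linarith
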